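/- If a K-algebra homomorphism φ: K[x₁,...,xₙ] → K[x₁,...,xₙ] satisfies φ(p) = x₁ for some polynomial p, then K[p] is a retract of K[x₁,...,xₙ]. -/
import Mathlib


open MvPolynomial

theorem maps_to_x1_implies_retract (K : Type*) [Field K] [CharZero K]
    (n : ℕ) (hn : 0 < n)
    (φ : MvPolynomial (Fin n) K →ₐ[K] MvPolynomial (Fin n) K)
    (p : MvPolynomial (Fin n) K) (hφp : φ p = X ⟨0, hn⟩) :
    ∃ ρ : MvPolynomial (Fin n) K →ₐ[K] MvPolynomial (Fin n) K,
      ρ.comp ρ = ρ ∧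
      ρ.range = Algebra.adjoin K ({p} : Set (MvPolynomial (Fin n) K)) := by
  set g : Fin n → MvPolynomial (Fin n) K := fun i => if i = ⟨0, hn⟩ then p else 0 with hg
  set ι : MvPolynomial (Fin n) K →ₐ[K] MvPolynomial (Fin n) K := aeval g with hι
  refine ⟨ι.comp φ, ?_, ?_⟩
  · have key : (ι.comp φ).comp ι = ι := by
      apply MvPolynomial.algHom_ext
      intro i
      simp only [AlgHom.comp_apply, hι, aeval_X, hg]
      by_cases h : i = ⟨0, hn⟩
      · simp [h, hφp]
      · simp [h]
    rw [← AlgHom.comp_assoc, key]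
  · apply le_antisymm
    · rintro _ ⟨q, rfl⟩
      have : ι (φ q) ∈ Algebra.adjoin K (Set.range g) := by
        rw [Algebra.adjoin_range_eq_range_aeval]
        exact ⟨φ q, rfl⟩
      refine Algebra.adjoin_le ?_ this
      rintro _ ⟨i, rfl⟩
      by_cases h : i = ⟨0, hn⟩
      · simpa [hg, h] using Algebra.subset_adjoin (Set.mem_singleton p)
      · simpa [hg, h] using Subalgebra.zero_mem (Algebra.adjoin K ({p} : Set (MvPolynomial (Fin n) K)))
    · rw [Algebra.adjoin_le_iff]
      intro x hx
      rw [Set.mem_singleton_iff] at hx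
      subst hx
      refine ⟨x, ?_⟩
      simp [hι, hφp, hg]
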